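/- The horizons are lightlike hypersurfaces: for every θ and every horizon-tangent vector (v_t, v_φ, v_θ) ∈ ℝ³ (i.e., with vanishing ∂_r-component), the extended Kerr–de Sitter quadratic form at r = r_e reduces (using μ(r_e) = 0) to S(v) = (c(θ)sin²θ/(b²ρ²(r_e,θ)))·(a·v_t − (r_e²+a²)v_φ)² + (ρ²(r_e,θ)/c(θ))·v_θ², which is nonnegative; moreover, if sin θ ≠ 0, then S(v) = 0 if and only if v_θ = 0 and v_φ = a·v_t/(r_e²+a²), i.e., if and only if v is a multiple of the horizon Killing field ∂_{t₊} + (a/(r_e²+a²))∂_{φ₊}. The analogous statement holds at r = r_c. -/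

import Mathlib

open Real

lemma kds_aux (Λ a : ℝ) (hΛ : 0 < Λ) (r : ℝ) (hr : r ≠ 0)
    (μ : ℝ → ℝ) (hμr : μ r = 0)
    (b : ℝ) (hb : b = 1 + Λ*a^2/3)
    (c : ℝ → ℝ) (hc : ∀ θ, c θ = 1 + Λ*a^2/3*(cos θ)^2)
    (f : ℝ → ℝ)
    (gp : ℝ → ℝ → ℝ → ℝ → ℝ → ℝ → ℝ)
    (hgp : ∀ r θ v_t v_r v_φ v_θ,
      gp r θ v_t v_r v_φ v_θ
        = (r^2 + a^2*(cos θ)^2)*((1 - (f r)^2)/μ r)*v_r^2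
          - (2*f r/b)*(v_t - a*(sin θ)^2*v_φ)*v_r
          - (μ r/(b^2*(r^2 + a^2*(cos θ)^2)))*(v_t - a*(sin θ)^2*v_φ)^2
          + (c θ*(sin θ)^2/(b^2*(r^2 + a^2*(cos θ)^2)))*(a*v_t - (r^2 + a^2)*v_φ)^2
          + ((r^2 + a^2*(cos θ)^2)/c θ)*v_θ^2)
    (θ v_t v_φ v_θ : ℝ) :
    gp r θ v_t 0 v_φ v_θ
      = (c θ*(sin θ)^2/(b^2*(r^2 + a^2*(cos θ)^2)))*(a*v_t - (r^2 + a^2)*v_φ)^2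
        + ((r^2 + a^2*(cos θ)^2)/c θ)*v_θ^2 ∧
    0 ≤ (c θ*(sin θ)^2/(b^2*(r^2 + a^2*(cos θ)^2)))*(a*v_t - (r^2 + a^2)*v_φ)^2
        + ((r^2 + a^2*(cos θ)^2)/c θ)*v_θ^2 ∧
    (sin θ ≠ 0 →
      ((c θ*(sin θ)^2/(b^2*(r^2 + a^2*(cos θ)^2)))*(a*v_t - (r^2 + a^2)*v_φ)^2
        + ((r^2 + a^2*(cos θ)^2)/c θ)*v_θ^2 = 0
        ↔ v_θ = 0 ∧ v_φ = a*v_t/(r^2 + a^2))) := by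
  have hr2 : 0 < r^2 := by positivity
  have hρ : 0 < r^2 + a^2*(cos θ)^2 := by nlinarith [sq_nonneg (a*cos θ)]
  have hr2a : 0 < r^2 + a^2 := by nlinarith [sq_nonneg a]
  have hcθ : 0 < c θ := by
    rw [hc]; nlinarith [mul_nonneg (mul_nonneg hΛ.le (sq_nonneg a)) (sq_nonneg (cos θ))]
  have hbp : 0 < b := by
    rw [hb]; nlinarith [mul_nonneg hΛ.le (sq_nonneg a)]
  set A := c θ*(sin θ)^2/(b^2*(r^2 + a^2*(cos θ)^2)) with hAdef
  set B := (r^2 + a^2*(cos θ)^2)/c θ with hBdef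
  set X := a*v_t - (r^2 + a^2)*v_φ with hXdef
  have hA : 0 ≤ A :=
    div_nonneg (mul_nonneg hcθ.le (sq_nonneg _)) (mul_nonneg (sq_nonneg b) hρ.le)
  have hBpos : 0 < B := div_pos hρ hcθ
  refine ⟨by rw [hgp, hμr]; ring,
    add_nonneg (mul_nonneg hA (sq_nonneg _)) (mul_nonneg hBpos.le (sq_nonneg _)), ?_⟩
  intro hs
  have hApos : 0 < A :=
    div_pos (mul_pos hcθ (by positivity)) (mul_pos (by positivity) hρ)
  constructor
  · intro h0
    have t1 : 0 ≤ A * X^2 := mul_nonneg hApos.le (sq_nonneg _)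
    have t2 : 0 ≤ B * v_θ^2 := mul_nonneg hBpos.le (sq_nonneg _)
    have e1 : A * X^2 = 0 := by linarith
    have e2 : B * v_θ^2 = 0 := by linarith
    have hX2 : X^2 = 0 := (mul_eq_zero.mp e1).resolve_left hApos.ne'
    have hv2 : v_θ^2 = 0 := (mul_eq_zero.mp e2).resolve_left hBpos.ne'
    have hX0 : X = 0 := pow_eq_zero_iff (n := 2) (by norm_num) |>.mp hX2
    refine ⟨pow_eq_zero_iff (n := 2) (by norm_num) |>.mp hv2, ?_⟩
    rw [hXdef] at hX0
    field_simp
    linarith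
  · rintro ⟨h1, h2⟩
    have hX0 : X = 0 := by rw [hXdef, h2]; field_simp; ring
    rw [hX0, h1]; ring

lemma kds_roots_ne_zero (Λ m a rm rC re rc : ℝ) (hΛ : 0 < Λ) (hm : 0 < m)
    (μ : ℝ → ℝ)
    (hμ : ∀ r, μ r = -(Λ/3)*r^4 + (1 - Λ*a^2/3)*r^2 - 2*m*r + a^2)
    (hord : rm < rC ∧ rC < re ∧ re < rc)
    (hroots : ∀ r, μ r = -(Λ/3)*(r - rm)*(r - rC)*(r - re)*(r - rc)) :
    re ≠ 0 ∧ rc ≠ 0 := by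
  obtain ⟨h1, h2, h3⟩ := hord
  have E : ∀ x : ℝ, -(Λ/3)*x^4 + (1 - Λ*a^2/3)*x^2 - 2*m*x + a^2
      = -(Λ/3)*(x - rm)*(x - rC)*(x - re)*(x - rc) := fun x => (hμ x).symm.trans (hroots x)
  have hs1 : Λ*(rm+rC+re+rc) = 0 := by
    linear_combination (-(1/4))*(E 2) + (1/4)*(E (-2)) + (1/2)*(E 1) - (1/2)*(E (-1))
  have hs3 : Λ*(rm*rC*re + rm*rC*rc + rm*re*rc + rC*re*rc) = -6*m := by
    linear_combination (1/4)*(E 2) - (1/4)*(E (-2)) - 2*(E 1) + 2*(E (-1))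
  constructor
  · intro h
    subst h
    have hrm : rm < 0 := by linarith
    have hrC : rC < 0 := by linarith
    nlinarith [mul_pos (mul_pos hΛ (mul_pos (mul_pos (neg_pos.mpr hrm) (neg_pos.mpr hrC)) h3)) hm]
  · intro h
    subst h
    have : rm + rC + re = 0 := by nlinarith
    linarith

/-- The horizons are lightlike hypersurfaces: for every `θ` and every
horizon-tangent vector `(v_t, v_φ, v_θ)` (vanishing `∂_r`-component), the extended
Kerr–de Sitter quadratic form `g₊` at `r = r_e` reduces (using `μ(r_e) = 0`) to
`S(v) = (c sin²θ/(b²ρ²))(a·v_t − (r_e²+a²)v_φ)² + (ρ²/c)v_θ² ≥ 0`; and if `sin θ ≠ 0`,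
then `S(v) = 0` iff `v_θ = 0` and `v_φ = a·v_t/(r_e²+a²)`, i.e. iff `v` is a multiple of
the horizon Killing field `∂_{t₊} + (a/(r_e²+a²))∂_{φ₊}`. Analogously at `r = r_c`. -/
theorem horizons_lightlike
    (Λ m a rm rC re rc : ℝ) (hΛ : 0 < Λ) (hm : 0 < m)
    (μ : ℝ → ℝ)
    (hμ : ∀ r, μ r = -(Λ/3)*r^4 + (1 - Λ*a^2/3)*r^2 - 2*m*r + a^2)
    (hord : rm < rC ∧ rC < re ∧ re < rc)
    (hroots : ∀ r, μ r = -(Λ/3)*(r - rm)*(r - rC)*(r - re)*(r - rc))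
    (b : ℝ) (hb : b = 1 + Λ*a^2/3)
    (c : ℝ → ℝ) (hc : ∀ θ, c θ = 1 + Λ*a^2/3*(cos θ)^2)
    (f : ℝ → ℝ) (hfe : f re = -1) (hfc : f rc = 1)
    (gp : ℝ → ℝ → ℝ → ℝ → ℝ → ℝ → ℝ)
    (hgp : ∀ r θ v_t v_r v_φ v_θ,
      gp r θ v_t v_r v_φ v_θ
        = (r^2 + a^2*(cos θ)^2)*((1 - (f r)^2)/μ r)*v_r^2
          - (2*f r/b)*(v_t - a*(sin θ)^2*v_φ)*v_r
          - (μ r/(b^2*(r^2 + a^2*(cos θ)^2)))*(v_t - a*(sin θ)^2*v_φ)^2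
          + (c θ*(sin θ)^2/(b^2*(r^2 + a^2*(cos θ)^2)))*(a*v_t - (r^2 + a^2)*v_φ)^2
          + ((r^2 + a^2*(cos θ)^2)/c θ)*v_θ^2) :
    ∀ θ v_t v_φ v_θ : ℝ,
      (let S : ℝ := (c θ*(sin θ)^2/(b^2*(re^2 + a^2*(cos θ)^2)))
            *(a*v_t - (re^2 + a^2)*v_φ)^2
          + ((re^2 + a^2*(cos θ)^2)/c θ)*v_θ^2
       gp re θ v_t 0 v_φ v_θ = S ∧ 0 ≤ S ∧
        (sin θ ≠ 0 → (S = 0 ↔ v_θ = 0 ∧ v_φ = a*v_t/(re^2 + a^2)))) ∧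
      (let S : ℝ := (c θ*(sin θ)^2/(b^2*(rc^2 + a^2*(cos θ)^2)))
            *(a*v_t - (rc^2 + a^2)*v_φ)^2
          + ((rc^2 + a^2*(cos θ)^2)/c θ)*v_θ^2
       gp rc θ v_t 0 v_φ v_θ = S ∧ 0 ≤ S ∧
        (sin θ ≠ 0 → (S = 0 ↔ v_θ = 0 ∧ v_φ = a*v_t/(rc^2 + a^2)))) := by
  obtain ⟨hre, hrc⟩ := kds_roots_ne_zero Λ m a rm rC re rc hΛ hm μ hμ hord hroots
  have hμre : μ re = 0 := by rw [hroots]; ring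
  have hμrc : μ rc = 0 := by rw [hroots]; ring
  intro θ v_t v_φ v_θ
  exact ⟨kds_aux Λ a hΛ re hre μ hμre b hb c hc f gp hgp θ v_t v_φ v_θ,
    kds_aux Λ a hΛ rc hrc μ hμrc b hb c hc f gp hgp θ v_t v_φ v_θ⟩
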